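/- arXiv:1501.05424 — 2 statements merged into one kernel-verified Lean document; each statement's English description precedes it below -/
import Mathlib

section
/- The palindromic width of a non-abelian free group with respect to a free basis is infinite. -/
/-- Evaluation of a word over an alphabet of generators and their inverses. -/
def evalWord {X G : Type*} [Group G] (f : X → G) (w : List (X × Bool)) : G :=
  (w.map (fun p => if p.2 then f p.1 else (f p.1)⁻¹)).prod

/-- A word is a palindrome if it reads the same forwards and backwards. -/
def IsPalindromeWord {X : Type*} (w : List (X × Bool)) : Prop := w.reverse = w

open List

namespace PW
open scoped Classical
variable {α β : Type*}

theorem prefix_concat_iff' {p l : List α} {a : α} :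
    p <+: l ++ [a] ↔ p = l ++ [a] ∨ p <+: l := by
  constructor
  · rintro ⟨t, ht⟩
    rcases t.eq_nil_or_concat with rfl | ⟨t', b, rfl⟩
    · left; simpa using ht
    · right
      rw [concat_eq_append, ← append_assoc] at ht
      exact ⟨t', (append_inj' ht rfl).1⟩
  · rintro (rfl | h)
    · exact prefix_refl _
    · exact h.trans (l.prefix_append [a])


/-- number of occurrences of `p` as a factor of `w` (counted by starting position). -/
noncomputable def occ (p : List α) : List α → ℕ
  | [] => 0
  | a :: t => (if p <+: (a :: t) then 1 else 0) + occ p t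

@[simp] theorem occ_nil (p : List α) : occ p [] = 0 := rfl

theorem occ_cons (p : List α) (a : α) (t : List α) :
    occ p (a :: t) = (if p <+: (a :: t) then 1 else 0) + occ p t := by
  rw [occ]

theorem occ_snoc (p w : List α) (a : α) :
    occ p (w ++ [a]) = occ p w + (if p <:+ w ++ [a] then 1 else 0) := by
  induction w with
  | nil =>
    simp only [nil_append, occ_cons, occ_nil]
    rw [add_comm]
    congr 1
    refine if_congr ?_ rfl rfl
    have h1 : p <+: [a] ↔ p = [a] ∨ p <+: ([] : List α) := by
      have := prefix_concat_iff' (p := p) (l := ([] : List α)) (a := a)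
      simpa using this
    rw [h1, suffix_cons_iff]
    simp [or_comm]
  | cons b w ih =>
    rw [cons_append, occ_cons, ih, occ_cons]
    have h1 : p <+: b :: (w ++ [a]) ↔ p = b :: (w ++ [a]) ∨ p <+: b :: w := by
      rw [← cons_append]; exact prefix_concat_iff'
    have h2 : p <:+ b :: (w ++ [a]) ↔ p = b :: (w ++ [a]) ∨ p <:+ w ++ [a] :=
      suffix_cons_iff
    by_cases hp : p = b :: (w ++ [a])
    · have hnp : ¬ p <+: b :: w := by
        intro hc
        have := hc.length_le
        simp [hp] at this
      have hns : ¬ p <:+ w ++ [a] := by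
        intro hc
        have := hc.length_le
        simp [hp] at this
      rw [if_pos (h1.2 (Or.inl hp)), if_pos (h2.2 (Or.inl hp)), if_neg hnp, if_neg hns]
      ring
    · have e1 : (p <+: b :: (w ++ [a])) ↔ p <+: b :: w := by
        rw [h1]; exact or_iff_right hp
      have e2 : (p <:+ b :: (w ++ [a])) ↔ p <:+ w ++ [a] := by
        rw [h2]; exact or_iff_right hp
      rw [if_congr e1 rfl rfl, if_congr e2 rfl rfl]
      ring

theorem occ_reverse (p w : List α) : occ p w.reverse = occ p.reverse w := by
  induction w with
  | nil => simp
  | cons a w ih =>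
    rw [reverse_cons, occ_snoc, ih, occ_cons]
    have : (p <:+ w.reverse ++ [a]) ↔ p.reverse <+: a :: w := by
      conv_lhs => rw [show w.reverse ++ [a] = (a :: w).reverse from by simp,
        show p = p.reverse.reverse from by simp]
      exact reverse_suffix
    rw [if_congr this rfl rfl]
    ring

theorem map_prefix_iff (g : α → β) (hg : Function.Injective g) :
    ∀ (p w : List α), (p.map g <+: w.map g) ↔ p <+: w
  | [], w => by simp
  | a :: p, [] => by simp
  | a :: p, b :: w => by
    simp only [map_cons, cons_prefix_cons, hg.eq_iff]
    exact and_congr_right fun _ => map_prefix_iff g hg p w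

theorem occ_map (g : α → β) (hg : Function.Injective g) (p w : List α) :
    occ (p.map g) (w.map g) = occ p w := by
  induction w with
  | nil => simp
  | cons a w ih =>
    rw [map_cons, occ_cons, occ_cons, ih]
    have hiff : (p.map g <+: g a :: w.map g) ↔ p <+: a :: w := by
      rw [← map_cons]; exact map_prefix_iff g hg _ _
    rw [if_congr hiff rfl rfl]

theorem occ_append_ge (p u v : List α) : occ p u + occ p v ≤ occ p (u ++ v) := by
  induction u with
  | nil => simp
  | cons a u ih =>
    rw [cons_append, occ_cons, occ_cons]
    have : (if p <+: a :: u then 1 else 0) ≤ (if p <+: a :: (u ++ v) then (1:ℕ) else 0) := by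
      by_cases h : p <+: a :: u
      · rw [if_pos h, if_pos (h.trans (by rw [← cons_append]; exact (a :: u).prefix_append v))]
      · rw [if_neg h]; exact Nat.zero_le _
    omega

theorem prefix_append_iff_of_le {p l : List α} (v : List α) (h : p.length ≤ l.length) :
    p <+: l ++ v ↔ p <+: l := by
  rw [prefix_iff_eq_take, prefix_iff_eq_take, take_append_of_le_length h]

theorem occ_append_min (p u v : List α) :
    occ p (u ++ v) ≤ occ p u + occ p v + min u.length p.length := by
  induction u with
  | nil => simp
  | cons a u ih =>
    rw [cons_append, occ_cons, occ_cons]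
    by_cases h : p.length ≤ u.length + 1
    · have : (p <+: a :: (u ++ v)) ↔ p <+: a :: u := by
        rw [show a :: (u ++ v) = (a :: u) ++ v from rfl]
        exact prefix_append_iff_of_le v (by simpa using h)
      rw [if_congr this rfl rfl]
      have hm : min (a :: u).length p.length ≥ min u.length p.length := by
        simp only [length_cons]
        omega
      omega
    · have h1 : (if p <+: a :: (u ++ v) then (1:ℕ) else 0) ≤ 1 := by split <;> omega
      have h2 : min (a :: u).length p.length = u.length + 1 := by
        simp only [length_cons]; omega
      have h3 : min u.length p.length ≤ u.length := Nat.min_le_left _ _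
      omega

theorem occ_append_le (p u v : List α) :
    occ p (u ++ v) ≤ occ p u + occ p v + p.length :=
  le_trans (occ_append_min p u v) (by have := Nat.min_le_right u.length p.length; omega)

theorem occ_take (p u v : List α) (m : ℕ) (hm : p.length ≤ m + 1) :
    occ p (u ++ v) + occ p (v.take m) = occ p (u ++ v.take m) + occ p v := by
  induction u with
  | nil => simp [add_comm]
  | cons a u ih =>
    rw [cons_append, cons_append, occ_cons, occ_cons (t := u ++ v.take m)]
    have hiff : (p <+: a :: (u ++ v)) ↔ p <+: a :: (u ++ v.take m) := by
      rcases p with _ | ⟨q, p'⟩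
      · simp
      · have hlen : p'.length ≤ m := by
          simp only [length_cons] at hm; omega
        have htake : (u ++ v).take p'.length = (u ++ v.take m).take p'.length := by
          rw [take_append, take_append, take_take,
            min_eq_left (by omega)]
        rw [prefix_iff_eq_take, prefix_iff_eq_take]
        simp only [length_cons, take_succ_cons]
        rw [htake]
    rw [if_congr hiff rfl rfl]
    omega


section Red
variable {X : Type*} [DecidableEq X]
open FreeGroup

/-- reducedness as a chain condition -/
def IsRed (w : List (X × Bool)) : Prop :=
  w.Chain' (fun a b => ¬(a.1 = b.1 ∧ b.2 = !a.2))

theorem bool_flip {a b : Bool} : (a = !b) ↔ (b = !a) := by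
  cases a <;> cases b <;> simp

theorem isRed_reduce (w : List (X × Bool)) : IsRed (reduce w) := by
  induction w with
  | nil => simp [IsRed, List.Chain']
  | cons a w ih =>
    rw [reduce.cons]
    rcases h : reduce w with _ | ⟨hd, tl⟩
    · simp [IsRed, List.Chain']
    · rw [h] at ih
      by_cases hc : a.1 = hd.1 ∧ a.2 = !hd.2
      · simp only [if_pos hc]
        exact ih.tail
      · simp only [if_neg hc]
        refine List.isChain_cons_cons.2 ⟨?_, ih⟩
        intro ⟨h1, h2⟩
        exact hc ⟨h1, bool_flip.2 h2⟩

theorem reduce_of_isRed {w : List (X × Bool)} (h : IsRed w) : reduce w = w := by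
  induction w with
  | nil => rfl
  | cons a w ih =>
    have hw : reduce w = w := ih h.tail
    rw [reduce.cons, hw]
    rcases w with _ | ⟨b, t⟩
    · rfl
    · have hR := (List.isChain_cons_cons.1 h).1
      have : ¬(a.1 = b.1 ∧ a.2 = !b.2) := by
        intro ⟨h1, h2⟩
        exact hR ⟨h1, bool_flip.1 h2⟩
      simp only [if_neg this]

theorem isRed_toWord (g : FreeGroup X) : IsRed g.toWord := by
  rw [← reduce_toWord]
  exact isRed_reduce _

theorem invRev_snoc (t : List (X × Bool)) (c : X × Bool) :
    invRev (t ++ [c]) = (c.1, !c.2) :: invRev t := by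
  simp [invRev]

/-- cancellation structure of the product of two reduced words -/
theorem cancel_structure : ∀ (u v : List (X × Bool)), IsRed u → IsRed v →
    ∃ a t b, u = a ++ t ∧ v = invRev t ++ b ∧ reduce (u ++ v) = a ++ b := by
  intro u
  induction u using List.reverseRecOn with
  | nil =>
    intro v hu hv
    exact ⟨[], [], v, rfl, by simp [invRev], by simpa using reduce_of_isRed hv⟩
  | append_singleton u' c IH =>
    intro v hu hv
    rcases v with _ | ⟨d, v'⟩
    · exact ⟨u' ++ [c], [], [], by simp, by simp [invRev], by simpa using reduce_of_isRed hu⟩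
    · by_cases hc : c.1 = d.1 ∧ d.2 = !c.2
      · have hu' : IsRed u' := (List.isChain_append.1 hu).1
        have hv' : IsRed v' := hv.tail
        obtain ⟨a, t, b, h1, h2, h3⟩ := IH v' hu' hv'
        refine ⟨a, t ++ [c], b, by rw [h1, List.append_assoc], ?_, ?_⟩
        · rw [invRev_snoc]
          have hd : d = (c.1, !c.2) := by
            rcases hc with ⟨hc1, hc2⟩
            ext
            · exact hc1.symm
            · exact hc2
          rw [← hd, h2]
          rfl
        · have hstep : Red.Step ((u' ++ [c]) ++ d :: v') (u' ++ v') := by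
            have hd : d = (c.1, !c.2) := by
              rcases hc with ⟨hc1, hc2⟩
              ext
              · exact hc1.symm
              · exact hc2
            rw [hd, List.append_assoc]
            have : c = (c.1, c.2) := rfl
            rw [this]
            exact Red.Step.not
          have := reduce.eq_of_red (Relation.ReflTransGen.single hstep)
          rw [this, h3]
      · refine ⟨u' ++ [c], [], d :: v', by simp, by simp [invRev], ?_⟩
        apply reduce_of_isRed
        refine List.isChain_append.2 ⟨hu, hv, ?_⟩
        intro p hp q hq
        have hp' : p = c := by
          rw [List.getLast?_concat] at hp
          exact (Option.some_inj.1 hp).symm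
        have hq' : q = d := by
          simp at hq
          exact hq.symm
        rw [hp', hq']
        exact hc

end Red

section Pattern
variable {X : Type*}

/-- letterwise formal inversion -/
def negL (a : X × Bool) : X × Bool := (a.1, !a.2)

theorem negL_negL (a : X × Bool) : negL (negL a) = a := by
  simp [negL]

theorem negL_injective : Function.Injective (negL (X := X)) :=
  Function.LeftInverse.injective negL_negL

theorem map_negL_map_negL (w : List (X × Bool)) : (w.map negL).map negL = w := by
  rw [List.map_map]
  simp [Function.comp_def, negL_negL]

/-- the pattern `x x y x y y` -/
def pat (x y : X) : List (X × Bool) :=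
  [(x,true),(x,true),(y,true),(x,true),(y,true),(y,true)]

theorem pat_length (x y : X) : (pat x y).length = 6 := rfl

/-- the counting quasimorphism on words -/
noncomputable def fC (x y : X) (w : List (X × Bool)) : ℤ :=
  (occ (pat x y) w : ℤ) + occ ((pat x y).map negL) w
    - occ ((pat x y).reverse) w - occ (((pat x y).map negL).reverse) w

theorem occ_of_reverse_eq {q w : List (X × Bool)} (h : w.reverse = w) :
    occ q w = occ q.reverse w := by
  conv_lhs => rw [← h]
  rw [occ_reverse]

theorem fC_palindrome {x y : X} {w : List (X × Bool)} (h : w.reverse = w) :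
    fC x y w = 0 := by
  unfold fC
  rw [occ_of_reverse_eq (q := pat x y) h, occ_of_reverse_eq (q := (pat x y).map negL) h]
  ring

theorem occ_invRev [DecidableEq X] (q t : List (X × Bool)) :
    occ q (FreeGroup.invRev t) = occ (q.reverse.map negL) t := by
  have h1 : FreeGroup.invRev t = (t.map negL).reverse := by
    simp [FreeGroup.invRev, negL]
  rw [h1, occ_reverse]
  conv_lhs => rw [← map_negL_map_negL q.reverse]
  rw [occ_map negL negL_injective]

theorem fC_invRev [DecidableEq X] (x y : X) (t : List (X × Bool)) :
    fC x y (FreeGroup.invRev t) = - fC x y t := by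
  unfold fC
  rw [occ_invRev, occ_invRev, occ_invRev, occ_invRev]
  rw [List.map_reverse, List.reverse_reverse, List.reverse_reverse,
    map_negL_map_negL, List.map_reverse, map_negL_map_negL]
  ring

theorem fC_append_le (x y : X) (u v : List (X × Bool)) :
    fC x y (u ++ v) ≤ fC x y u + fC x y v + 12 ∧
      fC x y u + fC x y v ≤ fC x y (u ++ v) + 12 := by
  have l1 : ((pat x y)).length = 6 := rfl
  have l2 : ((pat x y).reverse).length = 6 := by simp [pat]
  have l3 : ((pat x y).map negL).length = 6 := by simp [pat]
  have l4 : (((pat x y).map negL).reverse).length = 6 := by simp [pat]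
  have g1 := occ_append_ge (pat x y) u v
  have g2 := occ_append_ge ((pat x y).reverse) u v
  have g3 := occ_append_ge ((pat x y).map negL) u v
  have g4 := occ_append_ge (((pat x y).map negL).reverse) u v
  have e1 := occ_append_le (pat x y) u v
  have e2 := occ_append_le ((pat x y).reverse) u v
  have e3 := occ_append_le ((pat x y).map negL) u v
  have e4 := occ_append_le (((pat x y).map negL).reverse) u v
  rw [l1] at e1; rw [l2] at e2; rw [l3] at e3; rw [l4] at e4
  unfold fC
  omega

end Pattern

section Group
variable {X : Type*}
open FreeGroup

theorem evalWord_append {G : Type*} [Group G] (f : X → G) (u v : List (X × Bool)) :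
    evalWord f (u ++ v) = evalWord f u * evalWord f v := by
  simp [evalWord]

theorem evalWord_cons {G : Type*} [Group G] (f : X → G) (a : X × Bool) (w : List (X × Bool)) :
    evalWord f (a :: w) = (if a.2 then f a.1 else (f a.1)⁻¹) * evalWord f w := by
  simp [evalWord]

theorem mk_singleton (a : X × Bool) :
    mk [a] = (if a.2 then FreeGroup.of a.1 else (FreeGroup.of a.1)⁻¹) := by
  rcases a with ⟨s, _ | _⟩
  · rw [if_neg (by simp)]
    rw [show FreeGroup.of s = mk [(s, true)] from rfl, inv_mk]
    simp [invRev]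
  · rw [if_pos rfl]
    rfl

theorem evalWord_eq_mk (w : List (X × Bool)) : evalWord FreeGroup.of w = mk w := by
  induction w with
  | nil => simp [evalWord, one_eq_mk]
  | cons a w ih =>
    rw [evalWord_cons, ih, show a :: w = [a] ++ w from rfl, ← mul_mk, mk_singleton]

/-- the automorphism inverting each generator -/
noncomputable def iota : FreeGroup X →* FreeGroup X :=
  FreeGroup.lift (fun s => (FreeGroup.of s)⁻¹)

theorem iota_of (s : X) : iota (FreeGroup.of s) = (FreeGroup.of s)⁻¹ :=
  FreeGroup.lift_apply_of

theorem iota_eval (w : List (X × Bool)) :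
    (evalWord FreeGroup.of w)⁻¹ = iota (evalWord FreeGroup.of w.reverse) := by
  induction w with
  | nil => simp [evalWord]
  | cons a w ih =>
    rw [evalWord_cons, List.reverse_cons, evalWord_append, _root_.map_mul, ← ih]
    have : iota (evalWord FreeGroup.of [a]) =
        (if a.2 then FreeGroup.of a.1 else (FreeGroup.of a.1)⁻¹)⁻¹ := by
      rcases a with ⟨s, _ | _⟩
      · simp [evalWord, iota_of]
      · simp [evalWord, iota_of]
    rw [this, mul_inv_rev]

theorem iota_mk (w : List (X × Bool)) : iota (mk w) = mk (w.map negL) := by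
  induction w with
  | nil =>
    rw [show mk ([] : List (X × Bool)) = 1 from one_eq_mk.symm]
    rw [_root_.map_one]
    exact one_eq_mk
  | cons a w ih =>
    rw [show a :: w = [a] ++ w from rfl, ← mul_mk, _root_.map_mul, ih,
      List.map_append, ← mul_mk]
    congr 1
    rcases a with ⟨s, _ | _⟩
    · rw [mk_singleton, if_neg (by simp), _root_.map_inv, iota_of, inv_inv]
      simp [negL, mk_singleton]
    · rw [mk_singleton, if_pos rfl, iota_of]
      simp [negL, mk_singleton]

variable [DecidableEq X]

theorem isRed_map_negL {w : List (X × Bool)} (h : IsRed w) : IsRed (w.map negL) := by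
  unfold IsRed List.Chain' at h ⊢
  rw [List.isChain_map]
  refine h.imp ?_
  intro a b hab ⟨h1, h2⟩
  refine hab ⟨h1, ?_⟩
  simpa [negL] using h2

theorem toWord_reverse_of_palindrome {w : List (X × Bool)} (hpal : w.reverse = w) :
    (toWord (evalWord FreeGroup.of w)).reverse = toWord (evalWord FreeGroup.of w) := by
  set p := evalWord FreeGroup.of w with hp
  have h1 : iota p = p⁻¹ := by
    rw [iota_eval w, hpal]
  have h2 : mk ((toWord p).map negL) = mk (invRev (toWord p)) := by
    have e1 : iota p = mk ((toWord p).map negL) := by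
      conv_lhs => rw [← mk_toWord (x := p)]
      exact iota_mk _
    have e2 : p⁻¹ = mk (invRev (toWord p)) := by
      conv_lhs => rw [← mk_toWord (x := p)]
      exact inv_mk
    rw [← e1, ← e2, h1]
  have h3 : (toWord p).map negL = invRev (toWord p) := by
    have h4 := congrArg toWord h2
    rw [toWord_mk, toWord_mk, reduce_invRev, reduce_toWord] at h4
    rwa [reduce_of_isRed (isRed_map_negL (isRed_toWord p))] at h4
  have h4 : (toWord p).map negL = ((toWord p).map negL).reverse := by
    conv_lhs => rw [h3]
    simp only [FreeGroup.invRev]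
    rfl
  have h5 := congrArg (List.map negL) h4
  rw [map_negL_map_negL, List.map_reverse, map_negL_map_negL] at h5
  exact h5.symm

/-- the counting quasimorphism on the free group -/
noncomputable def F (x y : X) (g : FreeGroup X) : ℤ := fC x y (toWord g)

theorem F_quasi (x y : X) (g h : FreeGroup X) :
    F x y (g * h) ≤ F x y g + F x y h + 36 ∧
      F x y g + F x y h ≤ F x y (g * h) + 36 := by
  obtain ⟨a, t, b, h1, h2, h3⟩ :=
    cancel_structure (toWord g) (toWord h) (isRed_toWord g) (isRed_toWord h)
  have hgh : toWord (g * h) = a ++ b := by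
    conv_lhs => rw [← mk_toWord (x := g), ← mk_toWord (x := h), mul_mk]
    rw [toWord_mk, h3]
  have e1 := fC_append_le x y a b
  have e2 := fC_append_le x y a t
  have e3 := fC_append_le x y (invRev t) b
  have e4 := fC_invRev x y t
  unfold F
  rw [hgh, h1, h2]
  omega

theorem F_one (x y : X) : F x y 1 = 0 := by
  unfold F
  rw [toWord_one]
  simp [fC]

theorem F_prod (x y : X) (ps : List (FreeGroup X)) (h : ∀ p ∈ ps, F x y p = 0) :
    F x y ps.prod ≤ 36 * ps.length ∧ -(36 * ps.length) ≤ F x y ps.prod := by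
  induction ps with
  | nil =>
    simp [F_one]
  | cons p ps ih =>
    have hp : F x y p = 0 := h p (by simp)
    have hps := ih (fun q hq => h q (by simp [hq]))
    have hq := F_quasi x y p ps.prod
    rw [List.prod_cons]
    simp only [List.length_cons]
    push_cast
    push_cast at hps
    omega

end Group

section Witness
variable {X : Type*}
open FreeGroup

/-- the word `(x x y x y y)^n` -/
def Wn (x y : X) : ℕ → List (X × Bool)
  | 0 => []
  | n + 1 => pat x y ++ Wn x y n

theorem Wn_pos (x y : X) : ∀ n, ∀ a ∈ Wn x y n, a.2 = true := by
  intro n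
  induction n with
  | zero => simp [Wn]
  | succ n ih =>
    intro a ha
    rw [Wn, List.mem_append] at ha
    rcases ha with ha | ha
    · simp [pat] at ha
      rcases ha with rfl | rfl | rfl | rfl | rfl | rfl <;> rfl
    · exact ih a ha

theorem isRed_of_pos : ∀ {w : List (X × Bool)}, (∀ a ∈ w, a.2 = true) → IsRed w
  | [], _ => List.isChain_nil
  | [a], _ => List.isChain_singleton a
  | a :: b :: t, h => by
    refine List.isChain_cons_cons.2 ⟨?_, isRed_of_pos (fun c hc => h c (by simp [hc]))⟩
    intro ⟨_, hc⟩
    rw [h a (by simp), h b (by simp)] at hc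
    simp at hc

variable [DecidableEq X]

theorem toWord_eval_Wn (x y : X) (n : ℕ) :
    toWord (evalWord FreeGroup.of (Wn x y n)) = Wn x y n := by
  rw [evalWord_eq_mk, toWord_mk, reduce_of_isRed (isRed_of_pos (Wn_pos x y n))]

theorem take5_Wn (x y : X) (n : ℕ) :
    (Wn x y (n + 1)).take 5 = (pat x y).take 5 := by
  rw [Wn, List.take_append_of_le_length (by rw [pat_length]; omega)]

theorem occ_step (x y : X) (q : List (X × Bool)) (hq : q.length ≤ 6) (n : ℕ) :
    occ q (Wn x y (n + 2)) + occ q ((pat x y).take 5) =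
      occ q (pat x y ++ (pat x y).take 5) + occ q (Wn x y (n + 1)) := by
  have key := occ_take q (pat x y) (Wn x y (n + 1)) 5 (by omega)
  rw [take5_Wn] at key
  exact key

theorem counts (x y : X) (hxy : x ≠ y) : ∀ n : ℕ,
    occ (pat x y) (Wn x y n) = n ∧
    occ ((pat x y).reverse) (Wn x y n) = 0 ∧
    occ ((pat x y).map negL) (Wn x y n) = 0 ∧
    occ (((pat x y).map negL).reverse) (Wn x y n) = 0 := by
  intro n
  induction n with
  | zero => simp [Wn]
  | succ n ih =>
    rcases n with _ | m
    · refine ⟨?_, ?_, ?_, ?_⟩ <;>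
      · show _ = _
        simp only [Wn]
        simp [occ, pat, negL, List.cons_prefix_cons, hxy, Ne.symm hxy, Prod.mk.injEq]
    · obtain ⟨i1, i2, i3, i4⟩ := ih
      have c1 : occ (pat x y) (pat x y ++ (pat x y).take 5) = 1 := by
        simp [occ, pat, List.cons_prefix_cons, hxy, Ne.symm hxy, Prod.mk.injEq]
      have c2 : occ ((pat x y).reverse) (pat x y ++ (pat x y).take 5) = 0 := by
        simp [occ, pat, List.cons_prefix_cons, hxy, Ne.symm hxy, Prod.mk.injEq]
      have c3 : occ ((pat x y).map negL) (pat x y ++ (pat x y).take 5) = 0 := by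
        simp [occ, pat, negL, List.cons_prefix_cons, hxy, Ne.symm hxy, Prod.mk.injEq]
      have c4 : occ (((pat x y).map negL).reverse) (pat x y ++ (pat x y).take 5) = 0 := by
        simp [occ, pat, negL, List.cons_prefix_cons, hxy, Ne.symm hxy, Prod.mk.injEq]
      have d1 : occ (pat x y) ((pat x y).take 5) = 0 := by
        simp [occ, pat, List.cons_prefix_cons, hxy, Ne.symm hxy, Prod.mk.injEq]
      have d2 : occ ((pat x y).reverse) ((pat x y).take 5) = 0 := by
        simp [occ, pat, List.cons_prefix_cons, hxy, Ne.symm hxy, Prod.mk.injEq]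
      have d3 : occ ((pat x y).map negL) ((pat x y).take 5) = 0 := by
        simp [occ, pat, negL, List.cons_prefix_cons, hxy, Ne.symm hxy, Prod.mk.injEq]
      have d4 : occ (((pat x y).map negL).reverse) ((pat x y).take 5) = 0 := by
        simp [occ, pat, negL, List.cons_prefix_cons, hxy, Ne.symm hxy, Prod.mk.injEq]
      have s1 := occ_step x y (pat x y) (by rw [pat_length]) m
      have s2 := occ_step x y ((pat x y).reverse) (by simp [pat]) m
      have s3 := occ_step x y ((pat x y).map negL) (by simp [pat]) m
      have s4 := occ_step x y (((pat x y).map negL).reverse) (by simp [pat]) m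
      have e : m + 1 + 1 = m + 2 := by omega
      rw [e]
      refine ⟨?_, ?_, ?_, ?_⟩ <;> omega

theorem F_Wn (x y : X) (hxy : x ≠ y) (n : ℕ) :
    F x y (evalWord FreeGroup.of (Wn x y n)) = n := by
  unfold F
  rw [toWord_eval_Wn]
  obtain ⟨i1, i2, i3, i4⟩ := counts x y hxy n
  unfold fC
  rw [i1, i2, i3, i4]
  push_cast
  ring

end Witness

end PW


/-- The palindromic width of a non-abelian free group with respect to a free
basis is infinite: for every `k` there is an element that is not a product of
at most `k` palindromes in the basis. -/
theorem palindromic_width_free_group_infinite {X : Type*} (x y : X) (hxy : x ≠ y)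
    (k : ℕ) :
    ∃ g : FreeGroup X, ¬ ∃ ws : List (List (X × Bool)),
      ws.length ≤ k ∧ (∀ w ∈ ws, IsPalindromeWord w) ∧
        (ws.map (evalWord FreeGroup.of)).prod = g := by
  classical
  refine ⟨evalWord FreeGroup.of (PW.Wn x y (36 * k + 1)), ?_⟩
  rintro ⟨ws, hlen, hpalin, hprod⟩
  have hF0 : ∀ p ∈ ws.map (evalWord FreeGroup.of), PW.F x y p = 0 := by
    intro p hp
    rcases List.mem_map.1 hp with ⟨w, hw, rfl⟩
    exact PW.fC_palindrome (PW.toWord_reverse_of_palindrome (hpalin w hw))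
  have hb := PW.F_prod x y (ws.map (evalWord FreeGroup.of)) hF0
  rw [hprod, PW.F_Wn x y hxy] at hb
  rw [List.length_map] at hb
  obtain ⟨hb1, -⟩ := hb
  have : (36 * k + 1 : ℤ) ≤ 36 * ws.length := by exact_mod_cast hb1
  have : (ws.length : ℤ) ≤ k := by exact_mod_cast hlen
  omega
end

section
/- In the solvable Baumslag–Solitar group BS(1,n) = ⟨a, t | t⁻¹at = aⁿ⟩ with n ≥ 2, every element is a product of at most 2 palindromes in the generators {a, t}, and the palindromic width is exactly 2. -/
/-- The relation `t⁻¹ a t = aⁿ` in the free group on `{a, t}` (generator `0`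
is `a`, generator `1` is `t`). -/
def bsRel (n : ℕ) : Set (FreeGroup (Fin 2)) :=
  {(FreeGroup.of 1)⁻¹ * FreeGroup.of 0 * FreeGroup.of 1 * (FreeGroup.of 0 ^ n)⁻¹}

/-- The solvable Baumslag–Solitar group `BS(1,n) = ⟨a, t | t⁻¹at = aⁿ⟩`. -/
def BS1 (n : ℕ) := PresentedGroup (bsRel n)

noncomputable instance (n : ℕ) : Group (BS1 n) := by unfold BS1; infer_instance

/-- The generators `a, t` of `BS(1,n)`. -/
noncomputable def bsGen (n : ℕ) : Fin 2 → BS1 n := fun i => PresentedGroup.of i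

section EvalLemmas

variable {X G H : Type*} [Group G] [Group H] (f : X → G)

theorem evalWord_nil : evalWord f ([] : List (X × Bool)) = 1 := rfl

theorem evalWord_cons (p : X × Bool) (w : List (X × Bool)) :
    evalWord f (p :: w) = (if p.2 then f p.1 else (f p.1)⁻¹) * evalWord f w := by
  simp [evalWord]

theorem evalWord_append (u v : List (X × Bool)) :
    evalWord f (u ++ v) = evalWord f u * evalWord f v := by
  simp [evalWord]

theorem evalWord_replicate (k : ℕ) (x : X) (b : Bool) :
    evalWord f (List.replicate k (x, b)) = (if b then f x else (f x)⁻¹) ^ k := by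
  simp [evalWord]

theorem evalWord_zrep (m : ℤ) (x : X) :
    evalWord f (List.replicate m.natAbs (x, decide (0 ≤ m))) = f x ^ m := by
  rcases le_or_gt 0 m with h | h
  · rw [evalWord_replicate, if_pos (by simpa using h), ← zpow_natCast]
    congr 1; omega
  · rw [evalWord_replicate, if_neg (by simpa using h.not_ge), inv_pow, ← zpow_natCast,
      ← zpow_neg]
    congr 1; omega

theorem evalWord_hom (φ : G →* H) (w : List (X × Bool)) :
    φ (evalWord f w) = evalWord (fun x => φ (f x)) w := by
  induction w with
  | nil => simp [evalWord]
  | cons p w ih =>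
      rw [evalWord_cons, evalWord_cons, map_mul, ih]
      rcases p with ⟨x, b⟩
      cases b <;> simp

theorem evalWord_reverse {σ : G} (hf : ∀ x, σ * (f x)⁻¹ * σ⁻¹ = f x)
    (w : List (X × Bool)) : evalWord f w.reverse = σ * (evalWord f w)⁻¹ * σ⁻¹ := by
  have hv : ∀ p : X × Bool, σ * (if p.2 then f p.1 else (f p.1)⁻¹)⁻¹ * σ⁻¹ =
      (if p.2 then f p.1 else (f p.1)⁻¹) := by
    rintro ⟨x, b⟩
    cases b
    · simp only [if_neg Bool.false_ne_true]
      have h2 := congrArg Inv.inv (hf x)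
      rw [inv_inv, ← h2]
      group
    · simpa using hf x
  induction w with
  | nil => simp [evalWord]
  | cons p w ih =>
      rw [List.reverse_cons, evalWord_append, ih, evalWord_cons, evalWord_cons, evalWord_nil,
        mul_one]
      have key : σ * ((if p.2 then f p.1 else (f p.1)⁻¹) * evalWord f w)⁻¹ * σ⁻¹ =
          (σ * (evalWord f w)⁻¹ * σ⁻¹) * (σ * (if p.2 then f p.1 else (f p.1)⁻¹)⁻¹ * σ⁻¹) := by
        group
      rw [key, hv p]

end EvalLemmas

section Part2

variable (n : ℕ)

/-- The dihedral image of the generators. -/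
noncomputable def dihGen : Fin 2 → DihedralGroup (n + 1) :=
  fun i => if i = 0 then .r 1 else .sr 0

theorem dih_rels : ∀ r ∈ bsRel n, FreeGroup.lift (dihGen n) r = 1 := by
  intro r hr
  rcases hr with rfl
  simp only [map_mul, map_inv, map_pow, FreeGroup.lift_apply_of, dihGen]
  norm_num
  have h1 : (DihedralGroup.sr 0 : DihedralGroup (n+1))⁻¹ = DihedralGroup.sr 0 :=
    inv_eq_of_mul_eq_one_right (by rw [DihedralGroup.sr_mul_sr, sub_self, DihedralGroup.one_def])
  have h2 : (DihedralGroup.r (n : ZMod (n+1)))⁻¹ = DihedralGroup.r (-(n : ZMod (n+1))) :=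
    inv_eq_of_mul_eq_one_right (by rw [DihedralGroup.r_mul_r, add_neg_cancel, DihedralGroup.one_def])
  rw [DihedralGroup.one_def]
  congr 1
  have : ((n : ℕ) + 1 : ZMod (n+1)) = 0 := by
    have := ZMod.natCast_self (n+1); push_cast at this; linear_combination this
  linear_combination -this

end Part2

section BSFacts

theorem bs_rel (n : ℕ) :
    (bsGen n 1)⁻¹ * bsGen n 0 * bsGen n 1 = (bsGen n 0) ^ n := by
  have h : PresentedGroup.mk (bsRel n)
      ((FreeGroup.of 1)⁻¹ * FreeGroup.of 0 * FreeGroup.of 1 * (FreeGroup.of 0 ^ n)⁻¹) = 1 :=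
    (QuotientGroup.eq_one_iff _).mpr (Subgroup.subset_normalClosure rfl)
  rw [map_mul, map_mul, map_mul, map_inv, map_inv, map_pow] at h
  have e : ∀ i : Fin 2, PresentedGroup.mk (bsRel n) (FreeGroup.of i) = bsGen n i := fun _ => rfl
  simp only [e] at h
  exact mul_inv_eq_one.mp h

theorem bs_conj_zpow (n : ℕ) (m : ℤ) :
    (bsGen n 1)⁻¹ * (bsGen n 0) ^ m * bsGen n 1 = (bsGen n 0) ^ (m * n) := by
  have key : ((bsGen n 1)⁻¹ * bsGen n 0 * ((bsGen n 1)⁻¹)⁻¹) ^ m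
      = (bsGen n 1)⁻¹ * (bsGen n 0) ^ m * ((bsGen n 1)⁻¹)⁻¹ := conj_zpow
  rw [inv_inv] at key
  rw [← key, bs_rel, ← zpow_natCast, ← zpow_mul, mul_comm]

theorem bs_conj_pow (n : ℕ) (k : ℕ) (m : ℤ) :
    (bsGen n 1) ^ (-(k:ℤ)) * (bsGen n 0) ^ m * (bsGen n 1) ^ (k:ℤ)
      = (bsGen n 0) ^ (m * (n:ℤ) ^ k) := by
  induction k generalizing m with
  | zero => simp
  | succ k ih =>
      have step : (bsGen n 1) ^ (-((k+1:ℕ):ℤ)) * (bsGen n 0) ^ m * (bsGen n 1) ^ ((k+1:ℕ):ℤ)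
          = (bsGen n 1) ^ (-(k:ℤ)) * ((bsGen n 1)⁻¹ * (bsGen n 0) ^ m * bsGen n 1)
            * (bsGen n 1) ^ (k:ℤ) := by
        push_cast
        group
      rw [step, bs_conj_zpow, ih]
      congr 1
      ring

theorem bs_form (n : ℕ) (e m q : ℤ) : ∃ (p : ℕ) (m' q' : ℤ),
    (bsGen n 1) ^ e * (bsGen n 0) ^ m * (bsGen n 1) ^ q
      = (bsGen n 1) ^ (p:ℤ) * (bsGen n 0) ^ m' * (bsGen n 1) ^ q' := by
  rcases le_or_gt 0 e with h | h
  · exact ⟨e.toNat, m, q, by rw [Int.toNat_of_nonneg h]⟩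
  · refine ⟨0, m * (n:ℤ) ^ (-e).toNat, e + q, ?_⟩
    have hc := bs_conj_pow n (-e).toNat m
    have he2 : (((-e).toNat : ℕ) : ℤ) = -e := by omega
    rw [he2, neg_neg] at hc
    calc (bsGen n 1) ^ e * (bsGen n 0) ^ m * (bsGen n 1) ^ q
        = ((bsGen n 1) ^ e * (bsGen n 0) ^ m * (bsGen n 1) ^ (-e)) * (bsGen n 1) ^ (e + q) := by
          group
      _ = (bsGen n 1) ^ ((0:ℕ):ℤ) * (bsGen n 0) ^ (m * (n:ℤ) ^ (-e).toNat)
            * (bsGen n 1) ^ (e + q) := by rw [hc]; norm_num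

theorem bs_nf (n : ℕ) (g : BS1 n) : ∃ (p : ℕ) (m q : ℤ),
    g = (bsGen n 1) ^ (p:ℤ) * (bsGen n 0) ^ m * (bsGen n 1) ^ q := by
  have hg : g ∈ Subgroup.closure (Set.range (bsGen n)) := by
    rw [show Set.range (bsGen n) = Set.range (PresentedGroup.of (rels := bsRel n)) from rfl]
    have h : (g : PresentedGroup (bsRel n)) ∈
        Subgroup.closure (Set.range (PresentedGroup.of (rels := bsRel n))) := by
      rw [PresentedGroup.closure_range_of]
      trivial
    exact h
  refine Subgroup.closure_induction (p := fun x _ => ∃ (p : ℕ) (m q : ℤ),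
      x = (bsGen n 1) ^ (p:ℤ) * (bsGen n 0) ^ m * (bsGen n 1) ^ q) ?_ ?_ ?_ ?_ hg
  · rintro x ⟨i, rfl⟩
    fin_cases i
    · exact ⟨0, 1, 0, by norm_num⟩
    · exact ⟨0, 0, 1, by norm_num⟩
  · exact ⟨0, 0, 0, by norm_num⟩
  · rintro x y _ _ ⟨p1, m1, q1, rfl⟩ ⟨p2, m2, q2, rfl⟩
    rcases le_or_gt 0 (q1 + (p2:ℤ)) with h | h
    · obtain ⟨k, hk⟩ : ∃ k : ℕ, q1 + (p2:ℤ) = (k:ℤ) := ⟨(q1 + (p2:ℤ)).toNat, by omega⟩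
      obtain rfl : q1 = (k:ℤ) - p2 := by omega
      refine ⟨p1 + k, m1 * (n:ℤ) ^ k + m2, q2, ?_⟩
      have hc := bs_conj_pow n k m1
      push_cast
      rw [zpow_add (bsGen n 0) (m1 * (n:ℤ) ^ k) m2, ← hc]
      group
    · obtain ⟨k, hk⟩ : ∃ k : ℕ, q1 + (p2:ℤ) = -(k:ℤ) := ⟨(-(q1 + (p2:ℤ))).toNat, by omega⟩
      obtain rfl : q1 = -(k:ℤ) - p2 := by omega
      refine ⟨p1, m1 + m2 * (n:ℤ) ^ k, (-(k:ℤ) - p2 + p2) + q2, ?_⟩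
      have hc := bs_conj_pow n k m2
      rw [zpow_add (bsGen n 0) m1 (m2 * (n:ℤ) ^ k), ← hc]
      group
  · rintro x _ ⟨p, m, q, rfl⟩
    obtain ⟨p', m', q', hf⟩ := bs_form n (-q) (-m) (-(p:ℤ))
    exact ⟨p', m', q', by rw [← hf]; group⟩

end BSFacts

theorem dih_inv_sr (n : ℕ) (i : ZMod n) : (DihedralGroup.sr i)⁻¹ = DihedralGroup.sr i :=
  inv_eq_of_mul_eq_one_right (by rw [DihedralGroup.sr_mul_sr, sub_self, DihedralGroup.one_def])

theorem dih_inv_r (n : ℕ) (i : ZMod n) : (DihedralGroup.r i)⁻¹ = DihedralGroup.r (-i) :=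
  inv_eq_of_mul_eq_one_right (by rw [DihedralGroup.r_mul_r, add_neg_cancel, DihedralGroup.one_def])

noncomputable def PhiD (n : ℕ) : BS1 n →* DihedralGroup (n + 1) :=
  PresentedGroup.toGroup (dih_rels n)

theorem PhiD_of (n : ℕ) (i : Fin 2) : PhiD n (bsGen n i) = dihGen n i :=
  PresentedGroup.toGroup.of _

/-- In `BS(1,n) = ⟨a, t | t⁻¹at = aⁿ⟩` with `n ≥ 2`, every element is a product
of at most `2` palindromes in the generators `{a, t}`, and the palindromic
width with respect to `{a, t}` is exactly `2`. -/
theorem palindromic_width_solvable_baumslag_solitar (n : ℕ) (hn : 2 ≤ n) :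
    (∀ g : BS1 n, ∃ ws : List (List (Fin 2 × Bool)),
      ws.length ≤ 2 ∧ (∀ w ∈ ws, IsPalindromeWord w) ∧
        (ws.map (evalWord (bsGen n))).prod = g) ∧
    (∃ g : BS1 n, ¬ ∃ ws : List (List (Fin 2 × Bool)),
      ws.length ≤ 1 ∧ (∀ w ∈ ws, IsPalindromeWord w) ∧
        (ws.map (evalWord (bsGen n))).prod = g) := by
  constructor
  · -- every element is a product of two palindromes
    intro g
    obtain ⟨p, m, q, rfl⟩ := bs_nf n g
    refine ⟨[List.replicate p ((1 : Fin 2), true)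
        ++ List.replicate m.natAbs ((0 : Fin 2), decide (0 ≤ m))
        ++ List.replicate p ((1 : Fin 2), true),
      List.replicate (q - (p:ℤ)).natAbs ((1 : Fin 2), decide (0 ≤ q - (p:ℤ)))], ?_, ?_, ?_⟩
    · norm_num
    · intro w hw
      simp only [List.mem_cons, List.not_mem_nil, or_false] at hw
      rcases hw with hw | hw
      · subst hw
        simp [IsPalindromeWord, List.reverse_append, List.reverse_replicate, List.append_assoc]
      · subst hw
        simp [IsPalindromeWord, List.reverse_replicate]
    · simp only [List.map_cons, List.map_nil, List.prod_cons, List.prod_nil, mul_one]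
      rw [evalWord_append, evalWord_append, evalWord_replicate, evalWord_zrep, evalWord_zrep,
        if_pos rfl]
      rw [← zpow_natCast (bsGen n 1) p]
      group
  · -- a ∗ t is not a product of ≤ 1 palindromes
    refine ⟨bsGen n 0 * bsGen n 1, ?_⟩
    rintro ⟨ws, hlen, hpal, hprod⟩
    set Φ := PhiD n with hΦ
    have hΦof : ∀ i, Φ (bsGen n i) = dihGen n i := fun i => PhiD_of n i
    have himg : Φ (bsGen n 0 * bsGen n 1) = DihedralGroup.sr (-1) := by
      rw [map_mul, hΦof, hΦof]
      show DihedralGroup.r 1 * DihedralGroup.sr 0 = _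
      rw [DihedralGroup.r_mul_sr, zero_sub]
    have h2ne : ((-1 : ZMod (n+1)) ≠ (1 : ZMod (n+1))) := by
      intro heq
      have h20 : ((2:ℕ) : ZMod (n+1)) = 0 := by push_cast; linear_combination -heq
      have := Nat.le_of_dvd (by norm_num) ((ZMod.natCast_eq_zero_iff 2 (n+1)).mp h20)
      omega
    match ws, hlen with
    | [], _ =>
        simp only [List.map_nil, List.prod_nil] at hprod
        have := congrArg Φ hprod
        rw [map_one, himg, DihedralGroup.one_def] at this
        exact absurd this (by intro h; cases h)
    | [w], _ =>
        simp only [List.map_cons, List.map_nil, List.prod_cons, List.prod_nil, mul_one] at hprod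
        have hpw : IsPalindromeWord w := hpal w (by simp)
        have hw : evalWord (dihGen n) w = DihedralGroup.sr (-1) := by
          have := congrArg Φ hprod
          rw [himg, evalWord_hom] at this
          rw [← this]
          congr 1
          funext i
          exact (hΦof i).symm
        have hσf : ∀ i, DihedralGroup.sr 0 * (dihGen n i)⁻¹ * (DihedralGroup.sr 0)⁻¹
            = dihGen n i := by
          intro i
          fin_cases i
          · show DihedralGroup.sr 0 * (DihedralGroup.r 1)⁻¹ * _ = DihedralGroup.r 1
            rw [dih_inv_r, dih_inv_sr, DihedralGroup.sr_mul_r, DihedralGroup.sr_mul_sr]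
            norm_num
          · show DihedralGroup.sr 0 * (DihedralGroup.sr 0)⁻¹ * _ = DihedralGroup.sr 0
            rw [dih_inv_sr, DihedralGroup.sr_mul_sr, DihedralGroup.r_mul_sr]
            norm_num
        have hrev := evalWord_reverse (dihGen n) hσf w
        rw [hpw, hw, dih_inv_sr, dih_inv_sr, DihedralGroup.sr_mul_sr,
          DihedralGroup.r_mul_sr] at hrev
        have : (-1 : ZMod (n+1)) = (1 : ZMod (n+1)) := by
          have := (DihedralGroup.sr.injEq _ _).mp hrev
          linear_combination this
        exact h2ne this
end
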